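/- Let A be an alphabet with exactly three letters and let F be a uniformly recurrent tree set over A with A ⊆ F. Let x ∈ F be a bispecial word of length n, and assume the Rauzy graph G_n of F is of the first infinite type with respect to x and a second special vertex y and words u, v, w, t. Set Y = { wᵏ t : k ≥ 0 }. Let m ≥ 0 be such that z = y wᵐ ∈ F. Then V = Y ∩ z⁻¹F is a z⁻¹F-maximal prefix code, where z⁻¹F = {p ∈ A* : zp ∈ F}. -/

import Mathlib

open List

variable {A : Type*}

/-- The `n`-th power `wⁿ` of a word (concatenation). -/
def wordPow (w : List A) (n : ℕ) : List A := (List.replicate n w).flatten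

/-- A set of words is factorial if it contains the factors of its elements. -/
def Factorial (F : Set (List A)) : Prop := ∀ ⦃u v : List A⦄, u ∈ F → v <:+: u → v ∈ F

/-- A set of words is recurrent if it is factorial and any two of its words
occur in a common word of the set, in a prescribed order. -/
def Recurrent (F : Set (List A)) : Prop :=
  Factorial F ∧ ∀ u ∈ F, ∀ w ∈ F, ∃ v : List A, u ++ v ++ w ∈ F

/-- A set of words is uniformly recurrent if it is factorial, right-essential, and
every word of the set occurs in all long enough words of the set. -/
def UniformlyRecurrent (F : Set (List A)) : Prop :=
  Factorial F ∧ (∀ w ∈ F, ∃ a : A, w ++ [a] ∈ F) ∧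
    ∀ u ∈ F, ∃ n ≥ 1, ∀ w ∈ F, w.length = n → u <:+: w

/-- A set of words is periodic if it is the set of factors of the powers of a single word. -/
def Periodic (F : Set (List A)) : Prop :=
  ∃ w : List A, F = {v | ∃ n : ℕ, v <:+: wordPow w n}

/-- `L(w)`, the set of left extensions of `w` in `F`. -/
def LeftExt (F : Set (List A)) (w : List A) : Set A := {a | a :: w ∈ F}

/-- `R(w)`, the set of right extensions of `w` in `F`. -/
def RightExt (F : Set (List A)) (w : List A) : Set A := {a | w ++ [a] ∈ F}

/-- A word is left-special if it has at least two left extensions. -/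
def LeftSpecial (F : Set (List A)) (w : List A) : Prop := 2 ≤ (LeftExt F w).ncard

/-- A word is right-special if it has at least two right extensions. -/
def RightSpecial (F : Set (List A)) (w : List A) : Prop := 2 ≤ (RightExt F w).ncard

/-- A word is bispecial if it is both left-special and right-special. -/
def Bispecial (F : Set (List A)) (w : List A) : Prop := LeftSpecial F w ∧ RightSpecial F w

/-- A set of words is biessential if it is factorial and every one of its words is
biextendable. -/
def Biessential (F : Set (List A)) : Prop :=
  Factorial F ∧ ∀ w ∈ F, ∃ a b : A, a :: (w ++ [b]) ∈ F

/-- The bipartite (simple, undirected) graph on `α ⊕ β` induced by a relation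
`E : α → β → Prop`. -/
def bipGraph {α β : Type*} (E : α → β → Prop) : SimpleGraph (α ⊕ β) where
  Adj x y := ∃ a b, E a b ∧ ((x = Sum.inl a ∧ y = Sum.inr b) ∨ (x = Sum.inr b ∧ y = Sum.inl a))
  symm := by
    constructor
    rintro x y ⟨a, b, h, hc⟩
    exact ⟨a, b, h, by tauto⟩
  loopless := by
    constructor
    rintro x ⟨a, b, h, hc⟩
    rcases hc with ⟨h1, h2⟩ | ⟨h1, h2⟩ <;> simp_all

/-- The extension graph `G(w)` of a word `w`: the bipartite graph on
`L(w) ⊔ R(w)` with an edge between `a` and `b` iff `awb ∈ F`. -/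
def extensionGraph (F : Set (List A)) (w : List A) :
    SimpleGraph ({a : A // a ∈ LeftExt F w} ⊕ {b : A // b ∈ RightExt F w}) :=
  bipGraph (fun a b => a.1 :: (w ++ [b.1]) ∈ F)

/-- A tree set: a biessential set all of whose extension graphs are trees. -/
def IsTreeSet (F : Set (List A)) : Prop :=
  Biessential F ∧ ∀ w ∈ F, (extensionGraph F w).IsTree

/-- The generalized extension graph `G_{U,V}(w)`: the bipartite graph on
`U(w) ⊔ V(w)` with an edge between `ℓ` and `r` iff `ℓwr ∈ F`. -/
def genExtGraph (F : Set (List A)) (U V : Set (List A)) (w : List A) :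
    SimpleGraph ({l : List A // l ∈ U ∧ l ++ w ∈ F} ⊕ {r : List A // r ∈ V ∧ w ++ r ∈ F}) :=
  bipGraph (fun l r => l.1 ++ w ++ r.1 ∈ F)

/-- A prefix code: a set of nonempty words none of which is a proper prefix of another. -/
def IsPrefixCode (U : Set (List A)) : Prop :=
  (∀ u ∈ U, u ≠ []) ∧ ∀ u ∈ U, ∀ v ∈ U, u <+: v → u = v

/-- A suffix code: a set of nonempty words none of which is a proper suffix of another. -/
def IsSuffixCode (U : Set (List A)) : Prop :=
  (∀ u ∈ U, u ≠ []) ∧ ∀ u ∈ U, ∀ v ∈ U, u <:+ v → u = v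

/-- An `S`-maximal prefix code: a prefix code contained in `S` and not properly contained
in any prefix code contained in `S`. -/
def IsMaximalPrefixCodeIn (S U : Set (List A)) : Prop :=
  IsPrefixCode U ∧ U ⊆ S ∧ ∀ W, IsPrefixCode W → W ⊆ S → U ⊆ W → U = W

/-- An `S`-maximal suffix code. -/
def IsMaximalSuffixCodeIn (S U : Set (List A)) : Prop :=
  IsSuffixCode U ∧ U ⊆ S ∧ ∀ W, IsSuffixCode W → W ⊆ S → U ⊆ W → U = W

/-- `Γ_F(x)`, the set of right return words to `x` in `F`. -/
def ReturnWords (F : Set (List A)) (x : List A) : Set (List A) :=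
  {r | r ≠ [] ∧ x ++ r ∈ F ∧ ∃ s : List A, s ≠ [] ∧ x ++ r = s ++ x}

/-- `R_F(x) = Γ_F(x) \ Γ_F(x)A⁺`, the set of first right return words to `x` in `F`. -/
def FirstReturnWords (F : Set (List A)) (x : List A) : Set (List A) :=
  ReturnWords F x \ {r | ∃ r' ∈ ReturnWords F x, ∃ s : List A, s ≠ [] ∧ r = r' ++ s}

/-- The natural map from words to the free group. -/
def wordToFree (w : List A) : FreeGroup A := (w.map FreeGroup.of).prod

/-- `x` is unioccurrent in `y` if `x` occurs exactly once in `y`. -/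
def Unioccurrent (x y : List A) : Prop := ∃! p : List A × List A, y = p.1 ++ x ++ p.2

/-- Vertices of the Rauzy graph `G_n`: words of `F` of length `n`. -/
def RauzyVertex (F : Set (List A)) (n : ℕ) := {w : List A // w ∈ F ∧ w.length = n}

/-- Edges of the Rauzy graph `G_n`: an edge from `x` to `y` labeled `a` whenever
`xa ∈ F ∩ Ay`. -/
def RauzyEdge (F : Set (List A)) (n : ℕ) (x : RauzyVertex F n) (a : A)
    (y : RauzyVertex F n) : Prop :=
  x.1 ++ [a] ∈ F ∧ ∃ b : A, x.1 ++ [a] = b :: y.1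

/-- `GenPathLabel E p q g` holds when there is a generalized path (a path which may
traverse edges forwards or backwards) from `p` to `q` in the `A`-labeled graph with
edge relation `E`, whose label (product of contributions in the free group) is `g`. -/
inductive GenPathLabel {V : Type*} (E : V → A → V → Prop) : V → V → FreeGroup A → Prop
  | nil (v : V) : GenPathLabel E v v 1
  | fwd {p q r : V} {g : FreeGroup A} {a : A} :
      GenPathLabel E p q g → E q a r → GenPathLabel E p r (g * FreeGroup.of a)
  | bwd {p q r : V} {g : FreeGroup A} {a : A} :
      GenPathLabel E p q g → E r a q → GenPathLabel E p r (g * (FreeGroup.of a)⁻¹)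

/-- A vertex of a Rauzy graph is special if the corresponding word is left-special
or right-special. -/
def SpecialWord (F : Set (List A)) (w : List A) : Prop := LeftSpecial F w ∨ RightSpecial F w

/-- Nonempty directed paths in the Rauzy graph `G_n` all of whose intermediate
vertices are non-special, together with their labels. -/
inductive NSPath (F : Set (List A)) (n : ℕ) : RauzyVertex F n → RauzyVertex F n → List A → Prop
  | single {p q : RauzyVertex F n} {a : A} : RauzyEdge F n p a q → NSPath F n p q [a]
  | cons {p q r : RauzyVertex F n} {a : A} {l : List A} :
      RauzyEdge F n p a q → ¬ SpecialWord F q.1 → NSPath F n q r l → NSPath F n p r (a :: l)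

/-- The Rauzy graph `G_n` is of the first infinite type with respect to the special
vertices `x, y` and the words `u, v, w, t`: `x` and `y` are the only special vertices and
the simple directed paths between them with non-special intermediate vertices are exactly
`x → x` labeled `u`, `x → y` labeled `v`, `y → y` labeled `w` and `y → x` labeled `t`. -/
def FirstInfiniteType (F : Set (List A)) (n : ℕ) (x y : RauzyVertex F n)
    (u v w t : List A) : Prop :=
  x ≠ y ∧ SpecialWord F x.1 ∧ SpecialWord F y.1 ∧
    (∀ z : RauzyVertex F n, SpecialWord F z.1 → z = x ∨ z = y) ∧
    (∀ p q : RauzyVertex F n, (p = x ∨ p = y) → (q = x ∨ q = y) → ∀ l : List A,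
      (NSPath F n p q l ↔ ((p = x ∧ q = x ∧ l = u) ∨ (p = x ∧ q = y ∧ l = v) ∨
        (p = y ∧ q = y ∧ l = w) ∨ (p = y ∧ q = x ∧ l = t))))


lemma wordPow_zero (w : List A) : wordPow w 0 = [] := rfl
lemma wordPow_succ (w : List A) (k : ℕ) : wordPow w (k+1) = w ++ wordPow w k := by
  simp [wordPow, List.replicate_succ]
lemma wordPow_add (w : List A) (j k : ℕ) : wordPow w (j+k) = wordPow w j ++ wordPow w k := by
  induction j with
  | zero => simp [wordPow_zero]
  | succ j ih => rw [Nat.succ_add, wordPow_succ, wordPow_succ, ih, List.append_assoc]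
lemma wordPow_length (w : List A) (k : ℕ) : (wordPow w k).length = k * w.length := by
  induction k with
  | zero => simp [wordPow_zero]
  | succ k ih => rw [wordPow_succ]; simp [ih]; ring

section Aux
variable {F : Set (List A)} {n : ℕ}

lemma rauzyEdge_val {p q : RauzyVertex F n} {a : A} (h : RauzyEdge F n p a q) :
    q.1 = (p.1 ++ [a]).drop 1 := by
  obtain ⟨-, b, hb⟩ := h
  rw [hb]; rfl

lemma rauzyEdge_det {p q q' : RauzyVertex F n} {a : A}
    (h : RauzyEdge F n p a q) (h' : RauzyEdge F n p a q') : q = q' :=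
  Subtype.ext ((rauzyEdge_val h).trans (rauzyEdge_val h').symm)

/-- Deterministic walks in the Rauzy graph. -/
inductive RWalk (F : Set (List A)) (n : ℕ) : RauzyVertex F n → List A → RauzyVertex F n → Prop
  | nil (p) : RWalk F n p [] p
  | cons {p q r : RauzyVertex F n} {a : A} {l : List A} :
      RauzyEdge F n p a q → RWalk F n q l r → RWalk F n p (a :: l) r

lemma rwalk_det {p q q' : RauzyVertex F n} {l : List A}
    (h : RWalk F n p l q) (h' : RWalk F n p l q') : q = q' := by
  induction h generalizing q' with
  | nil => cases h'; rfl
  | cons e _ ih =>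
    cases h' with
    | cons e' w' => exact ih ((rauzyEdge_det e e') ▸ w')

lemma rwalk_append {p q r : RauzyVertex F n} {l₁ l₂ : List A}
    (h : RWalk F n p l₁ q) (h' : RWalk F n q l₂ r) : RWalk F n p (l₁ ++ l₂) r := by
  induction h with
  | nil => exact h'
  | cons e _ ih => exact RWalk.cons e (ih h')

lemma rwalk_split {p r : RauzyVertex F n} {l₁ l₂ : List A}
    (h : RWalk F n p (l₁ ++ l₂) r) : ∃ q, RWalk F n p l₁ q ∧ RWalk F n q l₂ r := by
  induction l₁ generalizing p with
  | nil => exact ⟨p, RWalk.nil p, h⟩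
  | cons a l₁ ih =>
    cases h with
    | cons e w =>
      obtain ⟨q, h1, h2⟩ := ih w
      exact ⟨q, RWalk.cons e h1, h2⟩

lemma nspath_rwalk {p q : RauzyVertex F n} {l : List A} (h : NSPath F n p q l) :
    RWalk F n p l q := by
  induction h with
  | single e => exact RWalk.cons e (RWalk.nil _)
  | cons e _ _ ih => exact RWalk.cons e ih

lemma nspath_ne_nil {p q : RauzyVertex F n} {l : List A} (h : NSPath F n p q l) : l ≠ [] := by
  cases h <;> simp

lemma rwalk_val {p r : RauzyVertex F n} {l : List A} (h : RWalk F n p l r) :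
    r.1 = (p.1 ++ l).drop l.length := by
  induction h with
  | nil => simp
  | @cons p q r a l e _ ih =>
    calc r.1 = (q.1 ++ l).drop l.length := ih
      _ = ((p.1 ++ [a]).drop 1 ++ l).drop l.length := by rw [rauzyEdge_val e]
      _ = (((p.1 ++ [a]) ++ l).drop 1).drop l.length := by
            congr 1
            exact (List.drop_append_of_le_length (by simp)).symm
      _ = (p.1 ++ a :: l).drop (a :: l).length := by
            rw [List.drop_drop, List.append_assoc]
            simp [Nat.add_comm]

lemma nspath_split {p r : RauzyVertex F n} {l₁ l₂ : List A}
    (h : NSPath F n p r (l₁ ++ l₂)) (h1 : l₁ ≠ []) (h2 : l₂ ≠ []) :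
    ∃ q, RWalk F n p l₁ q ∧ ¬ SpecialWord F q.1 ∧ NSPath F n q r l₂ := by
  induction l₁ generalizing p with
  | nil => exact absurd rfl h1
  | cons a l₁ ih =>
    simp only [List.cons_append] at h
    generalize hL : l₁ ++ l₂ = L at h
    cases h with
    | single e =>
      exact absurd (List.append_eq_nil_iff.mp hL).2 h2
    | cons e hs h' =>
      subst hL
      cases l₁ with
      | nil => exact ⟨_, RWalk.cons e (RWalk.nil _), hs, h'⟩
      | cons c l₁' =>
        obtain ⟨q, hw, hq, hp⟩ := ih h' (by simp)
        exact ⟨q, RWalk.cons e hw, hq, hp⟩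

lemma rwalk_to_nspath {p r : RauzyVertex F n} {l : List A}
    (h : RWalk F n p l r) (hne : l ≠ [])
    (hint : ∀ l₁ l₂ q, l = l₁ ++ l₂ → l₁ ≠ [] → l₂ ≠ [] → RWalk F n p l₁ q →
      ¬ SpecialWord F q.1) : NSPath F n p r l := by
  induction h with
  | nil => exact absurd rfl hne
  | @cons p q r a l e w ih =>
    cases l with
    | nil => cases w; exact NSPath.single e
    | cons c l' =>
      have hq : ¬ SpecialWord F q.1 :=
        hint [a] (c :: l') q rfl (by simp) (by simp) (RWalk.cons e (RWalk.nil _))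
      refine NSPath.cons e hq (ih (by simp) ?_)
      intro l₁ l₂ q' helt h1 h2 hw
      exact hint (a :: l₁) l₂ q' (by simp [helt]) (by simp) h2 (RWalk.cons e hw)

end Aux

section Aux2
variable {F : Set (List A)} {n : ℕ} {y xv : RauzyVertex F n} {w t : List A}

lemma rwalk_pow (hw : NSPath F n y y w) (k : ℕ) : RWalk F n y (wordPow w k) y := by
  induction k with
  | zero => exact RWalk.nil y
  | succ k ih => rw [wordPow_succ]; exact rwalk_append (nspath_rwalk hw) ih

/-- `t` is not a prefix of `wˢ ++ t` for `s ≥ 1`. -/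
lemma claimC (hxy : xv ≠ y) (hxs : SpecialWord F xv.1) (hys : SpecialWord F y.1)
    (hw : NSPath F n y y w) (ht : NSPath F n y xv t)
    {s : ℕ} (hs : 1 ≤ s) : ¬ (t <+: wordPow w s ++ t) := by
  intro hpre
  have hw' : w <+: wordPow w s ++ t := by
    obtain ⟨s', rfl⟩ : ∃ s', s = s' + 1 := ⟨s - 1, by omega⟩
    exact ⟨wordPow w s' ++ t, by rw [wordPow_succ, List.append_assoc]⟩
  rcases List.prefix_or_prefix_of_prefix hpre hw' with htw | hwt
  · obtain ⟨r, hr⟩ := htw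
    cases r with
    | nil =>
      rw [List.append_nil] at hr
      exact hxy (rwalk_det (nspath_rwalk ht) (hr ▸ nspath_rwalk hw))
    | cons c r' =>
      rw [← hr] at hw
      obtain ⟨q, hq1, hq2, -⟩ := nspath_split hw (nspath_ne_nil ht) (by simp)
      exact hq2 (rwalk_det hq1 (nspath_rwalk ht) ▸ hxs)
  · obtain ⟨r, hr⟩ := hwt
    cases r with
    | nil =>
      rw [List.append_nil] at hr
      exact hxy (rwalk_det (nspath_rwalk ht) (hr ▸ nspath_rwalk hw))
    | cons c r' =>
      rw [← hr] at ht
      obtain ⟨q, hq1, hq2, -⟩ := nspath_split ht (nspath_ne_nil hw) (by simp)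
      exact hq2 (rwalk_det hq1 (nspath_rwalk hw) ▸ hys)

lemma code_lemma (hxy : xv ≠ y) (hxs : SpecialWord F xv.1) (hys : SpecialWord F y.1)
    (hw : NSPath F n y y w) (ht : NSPath F n y xv t)
    {k j : ℕ} (h : wordPow w k ++ t <+: wordPow w j ++ t) : k = j := by
  have hwpos : 0 < w.length := List.length_pos_iff.mpr (nspath_ne_nil hw)
  have hlen := h.length_le
  simp only [List.length_append, wordPow_length] at hlen
  have hkj : k ≤ j := by
    by_contra hc
    push_neg at hc
    nlinarith
  rcases Nat.lt_or_ge k j with hlt | hge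
  · exfalso
    obtain ⟨s, rfl⟩ : ∃ s, j = k + s := ⟨j - k, by omega⟩
    rw [wordPow_add, List.append_assoc, List.prefix_append_right_inj] at h
    exact claimC hxy hxs hys hw ht (by omega) h
  · omega

/-- If the walk from `y` reading `c` passes through `xv` at some positive step,
then some `wᵏt` is a prefix of `c`. -/
lemma decomp (hxy : xv ≠ y) (hxs : SpecialWord F xv.1) (hys : SpecialWord F y.1)
    (hspec : ∀ z : RauzyVertex F n, SpecialWord F z.1 → z = xv ∨ z = y)
    (hw : NSPath F n y y w) (ht : NSPath F n y xv t)
    (hchar : ∀ (s : RauzyVertex F n) (l : List A), NSPath F n y s l → SpecialWord F s.1 →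
      (s = y ∧ l = w) ∨ (s = xv ∧ l = t)) :
    ∀ N c (r : RauzyVertex F n), c.length ≤ N → RWalk F n y c r →
      ∀ i, 1 ≤ i → i ≤ c.length → RWalk F n y (c.take i) xv →
      ∃ k, wordPow w k ++ t <+: c := by
  classical
  intro N
  induction N with
  | zero => intro c r hc hwalk i hi1 hi2 _; omega
  | succ N ihN =>
    intro c r hc hwalk i hi1 hi2 hws
    set P : ℕ → Prop := fun j => 1 ≤ j ∧ j ≤ c.length ∧
      ∃ s', RWalk F n y (c.take j) s' ∧ SpecialWord F s'.1 with hP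
    have hPi : P i := ⟨hi1, hi2, xv, hws, hxs⟩
    have hex : ∃ j, P j := ⟨i, hPi⟩
    set i₀ := Nat.find hex with hi₀def
    obtain ⟨hi₀1, hi₀2, s₀, hw₀, hs₀⟩ := Nat.find_spec hex
    rw [← hi₀def] at hi₀1 hi₀2 hw₀
    have htake0 : (c.take i₀).length = i₀ := by
      rw [List.length_take]; omega
    have hpath : NSPath F n y s₀ (c.take i₀) := by
      apply rwalk_to_nspath hw₀ (by intro h0; rw [h0] at htake0; simp at htake0; omega)
      intro l₁ l₂ q heq h1 h2 hwq
      have hl12 : l₁.length + l₂.length = i₀ := by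
        have h' := congrArg List.length heq
        rw [htake0] at h'
        simp only [List.length_append] at h'
        omega
      have hjlt : l₁.length < i₀ := by
        have := List.length_pos_iff.mpr h2
        omega
      have hl₁ : l₁ = c.take l₁.length := by
        have h' : l₁ = (c.take i₀).take l₁.length := by
          rw [heq]; exact List.take_left.symm
        conv_lhs => rw [h']
        rw [List.take_take, min_eq_left (le_of_lt hjlt)]
      intro hqs
      have : P l₁.length := ⟨List.length_pos_iff.mpr h1, by omega, q, hl₁ ▸ hwq, hqs⟩
      exact Nat.find_min hex hjlt this
    rcases hchar s₀ (c.take i₀) hpath hs₀ with ⟨hs₀y, hlbl⟩ | ⟨hs₀x, hlbl⟩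
    · -- first segment is w
      have hile : i₀ ≤ i := Nat.find_min' hex hPi
      have hine : i ≠ i₀ := by
        intro h
        rw [h] at hws
        have h' := rwalk_det hws hw₀
        rw [hs₀y] at h'
        exact hxy h' 
      have hilt : i₀ < i := by omega
      set c₂ := c.drop i₀ with hc₂
      have hcsplit : c = w ++ c₂ := by rw [← hlbl, List.take_append_drop]
      have hwalk₂ : RWalk F n y c₂ r := by
        rw [hcsplit] at hwalk
        obtain ⟨q, hq1, hq2⟩ := rwalk_split hwalk
        rwa [rwalk_det hq1 (nspath_rwalk hw)] at hq2
      have hi₂ : RWalk F n y (c₂.take (i - i₀)) xv := by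
        have htk : c.take i = w ++ c₂.take (i - i₀) := by
          rw [← hlbl, hc₂, ← List.take_add]
          congr 1
          omega
        rw [htk] at hws
        obtain ⟨q, hq1, hq2⟩ := rwalk_split hws
        rwa [rwalk_det hq1 (nspath_rwalk hw)] at hq2
      have hlc₂ : c₂.length ≤ N := by
        rw [hc₂, List.length_drop]; omega
      obtain ⟨k, hk⟩ := ihN c₂ r hlc₂ hwalk₂ (i - i₀) (by omega)
        (by rw [hc₂, List.length_drop]; omega) hi₂
      refine ⟨k + 1, ?_⟩
      obtain ⟨tl, htl⟩ := hk
      rw [hcsplit, ← htl, wordPow_succ]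
      exact ⟨tl, by simp [List.append_assoc]⟩
    · -- first segment is t
      exact ⟨0, by rw [wordPow_zero, List.nil_append, ← hlbl]; exact List.take_prefix i₀ c⟩
end Aux2

section Aux3
variable {F : Set (List A)} {n : ℕ}

lemma extend_in (hF : Factorial F) (hre : ∀ u ∈ F, ∃ a : A, u ++ [a] ∈ F) :
    ∀ (L : ℕ) (u : List A), u ∈ F → ∃ q : List A, q.length = L ∧ u ++ q ∈ F := by
  intro L
  induction L with
  | zero => intro u hu; exact ⟨[], rfl, by simpa⟩
  | succ L ih =>
    intro u hu
    obtain ⟨a, ha⟩ := hre u hu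
    obtain ⟨q, hq1, hq2⟩ := ih (u ++ [a]) ha
    refine ⟨[a] ++ q, by simp [hq1, Nat.add_comm], by rwa [← List.append_assoc]⟩

lemma rwalk_exists (hF : Factorial F) :
    ∀ (c : List A) (p : RauzyVertex F n), p.1 ++ c ∈ F → ∃ r, RWalk F n p c r := by
  intro c
  induction c with
  | nil => intro p _; exact ⟨p, RWalk.nil p⟩
  | cons a c' ih =>
    intro p hmem
    have h1 : p.1 ++ [a] ∈ F := hF hmem ⟨[], c', by simp⟩
    have hql : ((p.1 ++ [a]).drop 1).length = n := by
      simp [List.length_drop, p.2.2]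
    have hqm : (p.1 ++ [a]).drop 1 ∈ F := hF h1 (List.drop_suffix 1 _).isInfix
    have he : RauzyEdge F n p a ⟨(p.1 ++ [a]).drop 1, hqm, hql⟩ := by
      refine ⟨h1, (p.1 ++ [a]).head (by simp), ?_⟩
      show p.1 ++ [a] = _ :: (p.1 ++ [a]).drop 1
      rw [List.drop_one]
      exact (List.cons_head_tail (by simp)).symm
    have hnext : (p.1 ++ [a]).drop 1 ++ c' ∈ F := by
      have heq : (p.1 ++ [a]).drop 1 ++ c' = (p.1 ++ (a :: c')).drop 1 := by
        rw [show p.1 ++ (a :: c') = (p.1 ++ [a]) ++ c' from by simp]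
        exact (List.drop_append_of_le_length (by simp)).symm
      rw [heq]
      exact hF hmem (List.drop_suffix 1 _).isInfix
    obtain ⟨r, hr⟩ := ih ⟨(p.1 ++ [a]).drop 1, hqm, hql⟩ hnext
    exact ⟨r, RWalk.cons he hr⟩
end Aux3

/-- In the first infinite case, with `Y = w^*t` and `z = ywᵐ ∈ F`, the set
`V = Y ∩ z⁻¹F` is a `z⁻¹F`-maximal prefix code. -/
theorem maximal_prefix_code_infinite_case [Fintype A] (hcard : Fintype.card A = 3)
    (F : Set (List A)) (hUR : UniformlyRecurrent F) (hT : IsTreeSet F)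
    (hAF : ∀ a : A, [a] ∈ F) (x : List A) (hx : x ∈ F) (hbi : Bispecial F x)
    (y : RauzyVertex F x.length) (u v w t : List A)
    (htype : FirstInfiniteType F x.length ⟨x, hx, rfl⟩ y u v w t)
    (m : ℕ) (hz : y.1 ++ wordPow w m ∈ F) :
    IsMaximalPrefixCodeIn {p : List A | (y.1 ++ wordPow w m) ++ p ∈ F}
      ({p : List A | ∃ k : ℕ, p = wordPow w k ++ t} ∩
        {p : List A | (y.1 ++ wordPow w m) ++ p ∈ F}) := by
  classical
  obtain ⟨hF, hre, hUR3⟩ := hUR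
  generalize hxvdef : (⟨x, hx, rfl⟩ : RauzyVertex F x.length) = xv at htype
  obtain ⟨hxyne, hxs, hys, hspec, hpaths⟩ := htype
  have hxv1 : xv.1 = x := by rw [← hxvdef]
  set z := y.1 ++ wordPow w m with hzdef
  have hw : NSPath F x.length y y w :=
    (hpaths y y (Or.inr rfl) (Or.inr rfl) w).mpr (Or.inr (Or.inr (Or.inl ⟨rfl, rfl, rfl⟩)))
  have ht : NSPath F x.length y xv t :=
    (hpaths y xv (Or.inr rfl) (Or.inl rfl) t).mpr (Or.inr (Or.inr (Or.inr ⟨rfl, rfl, rfl⟩)))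
  have hchar : ∀ (s : RauzyVertex F x.length) (l : List A),
      NSPath F x.length y s l → SpecialWord F s.1 →
      (s = y ∧ l = w) ∨ (s = xv ∧ l = t) := by
    intro s l hp hsp
    have hs2 : s = xv ∨ s = y := hspec s hsp
    rcases (hpaths y s (Or.inr rfl) hs2 l).mp hp with h | h | h | h
    · exact absurd h.1.symm hxyne
    · exact absurd h.1.symm hxyne
    · exact Or.inl ⟨h.2.1, h.2.2⟩
    · exact Or.inr ⟨h.2.1, h.2.2⟩
  have tne : t ≠ [] := nspath_ne_nil ht
  have claim : ∀ p : List A, p ≠ [] → z ++ p ∈ F →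
      ∃ k, z ++ (wordPow w k ++ t) ∈ F ∧
        (p <+: wordPow w k ++ t ∨ wordPow w k ++ t <+: p) := by
    intro p hpne hpF
    obtain ⟨N, hN1, hNocc⟩ := hUR3 x hx
    obtain ⟨q₀, hq₀len, hq₀mem⟩ := extend_in hF hre (N + 1) (z ++ p) hpF
    set p' := p ++ q₀ with hp'def
    have hTmem : z ++ p' ∈ F := by rw [hp'def, ← List.append_assoc]; exact hq₀mem
    set T := z ++ p' with hTdef
    have hylen : y.1.length = x.length := y.2.2
    have hzlen : z.length = x.length + m * w.length := by
      rw [hzdef, List.length_append, hylen, wordPow_length]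
    have hp'len : N + 1 ≤ p'.length := by
      rw [hp'def, List.length_append, hq₀len]; omega
    have hTlen : T.length = x.length + m * w.length + p'.length := by
      rw [hTdef, List.length_append, hzlen]
    have hfull : y.1 ++ (wordPow w m ++ p') ∈ F := by
      rw [← List.append_assoc]; exact hTmem
    obtain ⟨R, hR⟩ := rwalk_exists hF (wordPow w m ++ p') y hfull
    obtain ⟨y', hy'1, hy'2⟩ := rwalk_split hR
    rw [rwalk_det hy'1 (rwalk_pow hw m)] at hy'2
    have hsfxmem : T.drop (T.length - N) ∈ F := hF hTmem (List.drop_suffix _ _).isInfix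
    have hsfxlen : (T.drop (T.length - N)).length = N := by
      rw [List.length_drop]; omega
    obtain ⟨a₁, b₁, hab⟩ := hNocc _ hsfxmem hsfxlen
    set i := (T.length - N) + a₁.length with hidef
    have hTsplit : T = (T.take (T.length - N) ++ a₁) ++ x ++ b₁ := by
      conv_lhs => rw [← List.take_append_drop (T.length - N) T, ← hab]
      simp [List.append_assoc]
    have hClen : (T.take (T.length - N) ++ a₁).length = i := by
      rw [List.length_append, List.length_take]
      omega
    have hTlen2 : T.length = i + x.length + b₁.length := by
      have hc := congrArg List.length hTsplit
      simp only [List.length_append, List.length_take] at hc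
      omega
    set j := i - m * w.length with hjdef
    have hj1 : 1 ≤ j := by omega
    have hj2 : j ≤ p'.length := by omega
    have htakei : (wordPow w m ++ p').take i = wordPow w m ++ p'.take j := by
      rw [show i = (wordPow w m).length + j from by rw [wordPow_length]; omega,
        List.take_length_add_append]
    rw [← List.take_append_drop i (wordPow w m ++ p')] at hR
    obtain ⟨s, hs1, hs2⟩ := rwalk_split hR
    have hsval : s.1 = x := by
      have hv := rwalk_val hs1
      have hlen' : ((wordPow w m ++ p').take i).length = i := by
        rw [List.length_take, List.length_append, wordPow_length]
        omega
      rw [hlen'] at hv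
      have h2 : y.1 ++ (wordPow w m ++ p').take i =
          (y.1 ++ (wordPow w m ++ p')).take (x.length + i) := by

        rw [show x.length + i = y.1.length + i from by rw [hylen], List.take_length_add_append]
      have h3 : y.1 ++ (wordPow w m ++ p') = T := by rw [hTdef, hzdef, List.append_assoc]
      rw [hv, h2, h3]
      conv_lhs => rw [hTsplit]
      rw [List.take_left' (l₂ := b₁) (by rw [List.length_append, hClen, Nat.add_comm]),
        List.drop_left' hClen]
    have hs' : s = xv := Subtype.ext (by rw [hsval]; exact hxv1.symm)
    rw [htakei] at hs1
    obtain ⟨y'', hA, hB⟩ := rwalk_split hs1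
    rw [rwalk_det hA (rwalk_pow hw m)] at hB
    rw [hs'] at hB
    obtain ⟨k, hk⟩ := decomp hxyne hxs hys hspec hw ht hchar p'.length p' R le_rfl hy'2
      j hj1 hj2 hB
    refine ⟨k, ?_, ?_⟩
    · obtain ⟨tl, htl⟩ := hk
      refine hF hTmem ⟨[], tl, ?_⟩
      rw [List.nil_append, List.append_assoc, htl, hTdef]
    · exact List.prefix_or_prefix_of_prefix ⟨q₀, hp'def.symm⟩ hk
  constructor
  · constructor
    · rintro p ⟨⟨k, rfl⟩, -⟩ hnil
      exact tne (List.append_eq_nil_iff.mp hnil).2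
    · rintro p ⟨⟨k, rfl⟩, -⟩ q ⟨⟨j, rfl⟩, -⟩ hpre
      rw [code_lemma hxyne hxs hys hw ht hpre]
  refine ⟨Set.inter_subset_right, ?_⟩
  intro W hWc hWS hVW
  refine Set.Subset.antisymm hVW ?_
  intro p hpW
  have hpS : z ++ p ∈ F := hWS hpW
  have hpne : p ≠ [] := hWc.1 p hpW
  obtain ⟨k, hmemk, hcomp⟩ := claim p hpne hpS
  have hkV : wordPow w k ++ t ∈
      ({p : List A | ∃ k : ℕ, p = wordPow w k ++ t} ∩
        {p : List A | (y.1 ++ wordPow w m) ++ p ∈ F}) := by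
    refine ⟨⟨k, rfl⟩, ?_⟩
    show z ++ (wordPow w k ++ t) ∈ F
    exact hmemk
  have hkW := hVW hkV
  rcases hcomp with h | h
  · rw [hWc.2 p hpW _ hkW h]
    exact hkV
  · rw [← hWc.2 _ hkW p hpW h]
    exact hkV
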